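/- Let 𝔤 = ⊕_{i=-k}^{k} 𝔤_i be a |k|-graded semisimple Lie algebra and V = V_0 ⊕ ... ⊕ V_N a finite-dimensional 𝔤-module graded so that 𝔤_i·V_j ⊆ V_{i+j}, with V_0 = ker(∂) where ∂ : V → 𝔤_-^* ⊗ V is the Chevalley–Eilenberg differential v ↦ (X ↦ X·v). Then for each 0 ≤ i ≤ N, the map φ_i : V_i → 𝒰_{-i}(𝔤_-)^* ⊗ V_0 given by φ_i(v)(u) = −u^⊤·v (where u ↦ u^⊤ is the anti-automorphism of 𝒰(𝔤_-) with X^⊤ = −X) is well-defined and injective. -/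

import Mathlib

open UniversalEnvelopingAlgebra

section Aux

variable {K nl V : Type*} [Field K]
    [LieRing nl] [LieAlgebra K nl]
    [AddCommGroup V] [Module K V] [LieRingModule nl V] [LieModule K nl V]

lemma aux_prod (g : ℤ → Submodule K nl) (Vm : ℤ → Submodule K V)
    (hcompat : ∀ i m : ℤ, ∀ x ∈ g i, ∀ v ∈ Vm m, ⁅x, v⁆ ∈ Vm (m + i))
    (τ : UniversalEnvelopingAlgebra K nl →ₗ[K] UniversalEnvelopingAlgebra K nl)
    (hτ1 : τ 1 = 1) (hτmul : ∀ a b, τ (a * b) = τ b * τ a)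
    (hτι : ∀ X : nl, τ (ι K X) = -(ι K X)) :
    ∀ (s : ℕ) (d : Fin s → ℕ) (X : Fin s → nl), (∀ t, X t ∈ g (-(d t : ℤ))) →
      ∀ (m : ℤ) (v : V), v ∈ Vm m →
        ((UniversalEnvelopingAlgebra.lift K (LieModule.toEnd K nl V))
          (τ ((List.ofFn fun t => ι K (X t)).prod))) v ∈ Vm (m - ∑ t, d t) := by
  intro s
  induction s with
  | zero =>
    intro d X hX m v hv
    simpa [hτ1] using hv
  | succ s ih =>
    intro d X hX m v hv
    set ρ := (UniversalEnvelopingAlgebra.lift K (LieModule.toEnd K nl V)) with hρ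
    have hw : ⁅X 0, v⁆ ∈ Vm (m - (d 0 : ℤ)) := by
      have := hcompat (-(d 0 : ℤ)) m (X 0) (hX 0) v hv
      simpa [sub_eq_add_neg] using this
    have := ih (fun t => d t.succ) (fun t => X t.succ) (fun t => hX t.succ)
      (m - (d 0 : ℤ)) (-⁅X 0, v⁆) (neg_mem hw)
    rw [List.ofFn_succ, List.prod_cons, hτmul, map_mul]
    have hcalc : ρ (τ (ι K (X 0))) v = -⁅X 0, v⁆ := by
      rw [hτι, map_neg]
      simp [hρ, UniversalEnvelopingAlgebra.lift_ι_apply]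
    rw [Module.End.mul_apply, hcalc]
    convert this using 2
    rw [Fin.sum_univ_succ]
    push_cast
    ring

end Aux

/-- Let `𝔤` be `|k|`-graded with nilpotent part `𝔫 = 𝔤₋` (graded by
`g j = 𝔤₋ⱼ`), and let `V = V₀ ⊕ ... ⊕ V_N` be a graded module with `𝔤ᵢ · Vⱼ ⊆ V_{i+j}`
and `V₀ = ker ∂` (the annihilator of the `𝔫`-action).  Then for `0 ≤ i ≤ N` the map
`φᵢ : Vᵢ → 𝒰₋ᵢ(𝔤₋)* ⊗ V₀`, `φᵢ(v)(u) = -u^⊤ · v` (with `u ↦ u^⊤` the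
anti-automorphism of `𝒰(𝔤₋)` with `X^⊤ = -X`) is well defined (takes values in `V₀`)
and injective. -/
theorem stmt15 {K nl V : Type*} [Field K] [CharZero K]
    [LieRing nl] [LieAlgebra K nl] [FiniteDimensional K nl]
    [AddCommGroup V] [Module K V] [LieRingModule nl V] [LieModule K nl V]
    [FiniteDimensional K V]
    (k N : ℕ) (g : ℤ → Submodule K nl)
    (hgint : DirectSum.IsInternal g)
    (hgsupp : ∀ i : ℤ, (i < -(k : ℤ) ∨ 0 ≤ i) → g i = ⊥)
    (hgbr : ∀ i j : ℤ, ∀ x ∈ g i, ∀ y ∈ g j, ⁅x, y⁆ ∈ g (i + j))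
    (Vm : ℤ → Submodule K V)
    (hVint : DirectSum.IsInternal Vm)
    (hVsupp : ∀ m : ℤ, (m < 0 ∨ (N : ℤ) < m) → Vm m = ⊥)
    (hcompat : ∀ i m : ℤ, ∀ x ∈ g i, ∀ v ∈ Vm m, ⁅x, v⁆ ∈ Vm (m + i))
    (hker : ∀ v : V, v ∈ Vm 0 ↔ ∀ x : nl, ⁅x, v⁆ = 0)
    (U : ℕ → Submodule K (UniversalEnvelopingAlgebra K nl))
    (hUint : DirectSum.IsInternal U)
    (hU1 : (1 : UniversalEnvelopingAlgebra K nl) ∈ U 0)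
    (hUmul : ∀ i j : ℕ, ∀ a ∈ U i, ∀ b ∈ U j, a * b ∈ U (i + j))
    (hUspan : ∀ i : ℕ, U i = Submodule.span K
      {u : UniversalEnvelopingAlgebra K nl |
        ∃ (s : ℕ) (d : Fin s → ℕ) (X : Fin s → nl),
          (∀ t, X t ∈ g (-(d t : ℤ))) ∧ (∑ t, d t) = i ∧
          u = (List.ofFn fun t => ι K (X t)).prod})
    (τ : UniversalEnvelopingAlgebra K nl →ₗ[K] UniversalEnvelopingAlgebra K nl)
    (hτbij : Function.Bijective τ) (hτ1 : τ 1 = 1)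
    (hτmul : ∀ a b, τ (a * b) = τ b * τ a)
    (hτι : ∀ X : nl, τ (ι K X) = -(ι K X)) :
    ∀ ρ : UniversalEnvelopingAlgebra K nl →ₐ[K] Module.End K V,
      ρ = (UniversalEnvelopingAlgebra.lift K) (LieModule.toEnd K nl V) →
      ∀ i : ℕ, i ≤ N →
        (∀ v ∈ Vm (i : ℤ), ∀ u ∈ U i, -((ρ (τ u)) v) ∈ Vm 0) ∧
        Function.Injective
          (fun v : ↥(Vm (i : ℤ)) => fun u : ↥(U i) => -((ρ (τ (u : _))) (v : V))) := by
  intro ρ hρ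
  subst hρ
  set ρ := (UniversalEnvelopingAlgebra.lift K (LieModule.toEnd K nl V)) with hρ
  -- well-definedness: degree shift
  have hwd : ∀ (i : ℕ) (u : UniversalEnvelopingAlgebra K nl), u ∈ U i →
      ∀ (m : ℤ) (v : V), v ∈ Vm m → (ρ (τ u)) v ∈ Vm (m - i) := by
    intro i u hu m v hv
    rw [hUspan i] at hu
    induction hu using Submodule.span_induction with
    | mem x hx =>
      obtain ⟨s, d, X, hX, hsum, rfl⟩ := hx
      have := aux_prod g Vm hcompat τ hτ1 hτmul hτι s d X hX m v hv
      rwa [hsum] at this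
    | zero => simp
    | add a b _ _ ha hb =>
      rw [map_add, map_add, LinearMap.add_apply]
      exact add_mem ha hb
    | smul c a _ ha =>
      rw [map_smul, map_smul, LinearMap.smul_apply]
      exact Submodule.smul_mem _ c ha
  -- the key injectivity statement, by strong induction on i
  have key : ∀ i : ℕ, i ≤ N → ∀ v ∈ Vm (i : ℤ),
      (∀ u ∈ U i, (ρ (τ u)) v = 0) → v = 0 := by
    intro i
    induction i using Nat.strong_induction_on with
    | _ i ih =>
      intro hiN v hv h0
      rcases Nat.eq_zero_or_pos i with rfl | hipos
      · have := h0 1 hU1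
        rw [hτ1, map_one] at this
        simpa using this
      · have hbr : ∀ j : ℤ, ∀ x ∈ g j, ⁅x, v⁆ = 0 := by
          intro j x hx
          by_cases h0j : 0 ≤ j
          · rw [hgsupp j (Or.inr h0j)] at hx
            rw [Submodule.mem_bot] at hx
            simp [hx]
          · push_neg at h0j
            set m : ℕ := (-j).toNat with hm
            have hmj : (m : ℤ) = -j := Int.toNat_of_nonneg (by omega)
            have hm1 : 1 ≤ m := by omega
            have hwv : ⁅x, v⁆ ∈ Vm ((i : ℤ) - m) := by
              have := hcompat j (i : ℤ) x hx v hv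
              rwa [show (i : ℤ) + j = (i : ℤ) - m by omega] at this
            by_cases him : (i : ℤ) - m < 0
            · rw [hVsupp _ (Or.inl him)] at hwv
              simpa using hwv
            · push_neg at him
              have hmi : m ≤ i := by exact_mod_cast (by omega : (m : ℤ) ≤ i)
              have hcast : ((i - m : ℕ) : ℤ) = (i : ℤ) - m := by
                push_cast [hmi]; ring
              apply ih (i - m) (by omega) (by omega) ⁅x, v⁆ (by rwa [hcast])
              intro u' hu'
              have hxU : ι K x ∈ U m := by
                rw [hUspan m]
                apply Submodule.subset_span
                refine ⟨1, fun _ => m, fun _ => x, fun t => by rw [hmj]; simpa using hx,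
                  by simp, by simp⟩
              have huU : ι K x * u' ∈ U i := by
                have := hUmul m (i - m) (ι K x) hxU u' hu'
                rwa [show m + (i - m) = i by omega] at this
              have h1 := h0 (ι K x * u') huU
              rw [hτmul, map_mul, Module.End.mul_apply, hτι, map_neg, LinearMap.neg_apply,
                hρ, UniversalEnvelopingAlgebra.lift_ι_apply, LieModule.toEnd_apply_apply,
                map_neg, neg_eq_zero] at h1
              exact h1
        have hv0 : v ∈ Vm 0 := by
          rw [hker]
          intro x
          have htop : x ∈ (⨆ j, g j) := by
            rw [hgint.submodule_iSup_eq_top]; trivial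
          have hS : (⨆ j, g j) ≤ LinearMap.ker
              ((LieModule.toEnd K nl V : nl →ₗ[K] Module.End K V).flip v) := by
            apply iSup_le
            intro j y hy
            rw [LinearMap.mem_ker]
            simpa using hbr j y hy
          have := hS htop
          rw [LinearMap.mem_ker] at this
          simpa using this
        by_contra hne
        have hdisj : Disjoint (Vm (i : ℤ)) (Vm 0) :=
          hVint.submodule_iSupIndep.pairwiseDisjoint (by exact_mod_cast hipos.ne')
        exact hne (Submodule.disjoint_def.mp hdisj v hv hv0)
  intro i hiN
  constructor
  · intro v hv u hu
    have := hwd i u hu (i : ℤ) v hv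
    rw [sub_self] at this
    exact neg_mem this
  · intro v1 v2 hf
    have hsub : ∀ u ∈ U i, (ρ (τ u)) ((v1 : V) - (v2 : V)) = 0 := by
      intro u hu
      have h := congrFun hf ⟨u, hu⟩
      simp only [neg_inj] at h
      rw [map_sub, h, sub_self]
    have h0 : (v1 : V) - (v2 : V) = 0 :=
      key i hiN _ (sub_mem v1.2 v2.2) hsub
    exact Subtype.ext (sub_eq_zero.mp h0)
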